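/- Let S ∈ Σ^m and let a, a' ∈ Σ^m satisfy rep_{subcl(S)}(a) = rep_{subcl(S)}(a'). Then f_BMH(a) = f_BMH(a') and g_BMH(a) = g_BMH(a'). -/

import Mathlib

/-- The longest suffix of `a` satisfying `p` (default `[]` if no suffix satisfies `p`). -/
def longestSuffixP {A : Type*} (p : List A → Prop) [DecidablePred p] (a : List A) : List A :=
  (a.tails.filter fun t => decide (p t)).headD []

/-- `rep_{subcl(S)}(a)`: the longest suffix of `a` lying in `subcl(S)`, the set of all
contiguous substrings of `S` (including the empty string), i.e. the longest suffix of `a`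
that is an infix of `S`. -/
def repSub {A : Type*} [DecidableEq A] (S : List A) (a : List A) : List A :=
  longestSuffixP (· <:+: S) a

open scoped Classical in
/-- `f_BM(w)` (= `f_BMH(w)`): the cost of window `w`, i.e. `m` if `w = S`, and otherwise the
least `i ∈ {1,…,m}` with `w_{m−i} ≠ s_{m−i}` (0-indexed; comparison from the right). -/
noncomputable def fBM {A : Type*} [Inhabited A] [DecidableEq A]
    (S : List A) (m : ℕ) (w : List A) : ℕ :=
  if w = S then m
  else sInf {i : ℕ | 1 ≤ i ∧ i ≤ m ∧ w.getI (m - i) ≠ S.getI (m - i)}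

open scoped Classical in
/-- The bad-character rule `bc^S(w,i)`: `m−i+1` if `w_{m−i} ∉ {s_0,…,s_{m−i−1}}`,
and otherwise the least `k ∈ {1,…,m−i}` with `w_{m−i} = s_{m−i−k}`. -/
noncomputable def bcBM {A : Type*} [Inhabited A] [DecidableEq A]
    (S : List A) (m : ℕ) (w : List A) (i : ℕ) : ℕ :=
  if ∃ j : ℕ, j + i < m ∧ S.getI j = w.getI (m - i) then
    sInf {k : ℕ | 1 ≤ k ∧ k ≤ m - i ∧ w.getI (m - i) = S.getI (m - i - k)}
  else m - i + 1

/-- `𝒮^S(w,i)`: the set of `k ∈ {0,…,m−i}` with `s_k…s_{k+i−2} = w_{m−i+1}…w_{m−1}` and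
`s_{k−1} ≠ w_{m−i}` whenever `k ≥ 1`. -/
def SBM {A : Type*} [Inhabited A] (S : List A) (m : ℕ) (w : List A) (i : ℕ) : Set ℕ :=
  {k : ℕ | k + i ≤ m ∧ (∀ j : ℕ, j + 1 < i → S.getI (k + j) = w.getI (m - i + 1 + j)) ∧
    (1 ≤ k → S.getI (k - 1) ≠ w.getI (m - i))}

/-- `𝒦^S(w,i)`: the set of `k ∈ {0,…,i−2}` with `s_0…s_k = w_{m−k−1}…w_{m−1}`. -/
def KBM {A : Type*} [Inhabited A] (S : List A) (m : ℕ) (w : List A) (i : ℕ) : Set ℕ :=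
  {k : ℕ | k + 2 ≤ i ∧ ∀ j : ℕ, j ≤ k → S.getI j = w.getI (m - k - 1 + j)}

open scoped Classical in
/-- The good-suffix rule `gs^S(w,i)`. -/
noncomputable def gsBM {A : Type*} [Inhabited A] (S : List A) (m : ℕ) (w : List A) (i : ℕ) : ℕ :=
  if (SBM S m w i).Nonempty then m - i - sSup (SBM S m w i) + 1
  else if (KBM S m w i).Nonempty then m - sSup (KBM S m w i) - 1
  else m

/-- The Boyer–Moore shift `g_BM(w) = max{bc^S(w, f_BM(w)), gs^S(w, f_BM(w))}`. -/
noncomputable def gBM {A : Type*} [Inhabited A] [DecidableEq A]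
    (S : List A) (m : ℕ) (w : List A) : ℕ :=
  max (bcBM S m w (fBM S m w)) (gsBM S m w (fBM S m w))

/-- The Boyer–Moore–Horspool cost `f_BMH = f_BM`. -/
noncomputable def fBMH {A : Type*} [Inhabited A] [DecidableEq A]
    (S : List A) (m : ℕ) (w : List A) : ℕ :=
  fBM S m w

/-- The Boyer–Moore–Horspool shift `g_BMH(w) = bc^S(w,1)`. -/
noncomputable def gBMH {A : Type*} [Inhabited A] [DecidableEq A]
    (S : List A) (m : ℕ) (w : List A) : ℕ :=
  bcBM S m w 1

section Helpers
variable {A : Type*}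

theorem longestSuffixP_nil (p : List A → Prop) [DecidablePred p] :
    longestSuffixP p [] = [] := by
  unfold longestSuffixP
  simp only [List.tails]
  by_cases h : p [] <;> simp [h, List.filter]

theorem longestSuffixP_cons (p : List A → Prop) [DecidablePred p] (x : A) (xs : List A) :
    longestSuffixP p (x :: xs) = if p (x :: xs) then x :: xs else longestSuffixP p xs := by
  unfold longestSuffixP
  rw [List.tails_cons, List.filter_cons]
  by_cases h : p (x :: xs) <;> simp [h]

theorem longestSuffixP_suffix (p : List A → Prop) [DecidablePred p] (a : List A) :
    longestSuffixP p a <:+ a := by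
  induction a with
  | nil => rw [longestSuffixP_nil]
  | cons x xs ih =>
    rw [longestSuffixP_cons]
    split
    · exact List.suffix_refl _
    · exact ih.trans (List.suffix_cons x xs)

theorem longestSuffixP_prop (p : List A → Prop) [DecidablePred p] (hnil : p []) (a : List A) :
    p (longestSuffixP p a) := by
  induction a with
  | nil => rwa [longestSuffixP_nil]
  | cons x xs ih =>
    rw [longestSuffixP_cons]
    split
    · assumption
    · exact ih

theorem longestSuffixP_maximal (p : List A → Prop) [DecidablePred p] {a t : List A}
    (ht : t <:+ a) (hpt : p t) : t.length ≤ (longestSuffixP p a).length := by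
  induction a with
  | nil =>
    rw [longestSuffixP_nil]
    obtain rfl := List.eq_nil_of_suffix_nil ht
    simp
  | cons x xs ih =>
    rw [longestSuffixP_cons]
    rcases List.suffix_cons_iff.mp ht with rfl | h
    · simp [hpt]
    · split
      · exact ht.length_le
      · exact ih h

end Helpers

set_option linter.unusedSectionVars false

section Helpers2
variable {A : Type*} [DecidableEq A] [Inhabited A]

theorem repSub_suffix (S a : List A) : repSub S a <:+ a :=
  longestSuffixP_suffix _ a

theorem repSub_infix (S a : List A) : repSub S a <:+: S := by
  unfold repSub
  exact longestSuffixP_prop (fun t => t <:+: S) List.nil_infix a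

theorem repSub_maximal {S a t : List A} (ht : t <:+ a) (hts : t <:+: S) :
    t.length ≤ (repSub S a).length :=
  longestSuffixP_maximal _ ht hts

theorem suffix_getI {r a : List A} (h : r <:+ a) {i : ℕ} (h1 : 1 ≤ i) (h2 : i ≤ r.length) :
    a.getI (a.length - i) = r.getI (r.length - i) := by
  obtain ⟨u, rfl⟩ := h
  have hl : (u ++ r).length = u.length + r.length := List.length_append
  have hlt : u.length + r.length - i < (u ++ r).length := by rw [hl]; omega
  have hlt2 : r.length - i < r.length := by omega
  rw [hl, List.getI_eq_getElem _ hlt, List.getI_eq_getElem _ hlt2,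
      List.getElem_append_right (by omega)]
  congr 1
  omega

theorem singleton_infix_of_mem {c : A} {S : List A} (h : c ∈ S) : [c] <:+: S := by
  obtain ⟨s, t, rfl⟩ := List.append_of_mem h
  exact ⟨s, t, by simp⟩

theorem repSub_self {S : List A} : repSub S S = S :=
  (repSub_suffix S S).eq_of_length
    (le_antisymm (repSub_suffix S S).length_le
      (repSub_maximal (List.suffix_refl S) (List.infix_refl S)))

theorem repSub_length_lt {S w : List A} {m : ℕ} (hS : S.length = m) (hw : w.length = m)
    (hne : w ≠ S) : (repSub S w).length < m := by
  rcases lt_or_eq_of_le ((repSub_suffix S w).length_le.trans_eq hw) with h | h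
  · exact h
  · exfalso
    have h1 : repSub S w = w := (repSub_suffix S w).eq_of_length (h.trans hw.symm)
    have h2 : repSub S w = S :=
      ((repSub_infix S w).sublist).eq_of_length (h.trans hS.symm)
    exact hne (h1 ▸ h2)

theorem mismatch_exists {S w : List A} {m : ℕ} (hS : S.length = m) (hw : w.length = m)
    (hne : w ≠ S) :
    ∃ i, 1 ≤ i ∧ i ≤ (repSub S w).length + 1 ∧ w.getI (m - i) ≠ S.getI (m - i) := by
  by_contra hc
  push_neg at hc
  set t := (repSub S w).length with hts
  have htm : t < m := repSub_length_lt hS hw hne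
  have hu : (w.drop (m - (t + 1))).length = t + 1 := by rw [List.length_drop, hw]; omega
  have hv : (S.drop (m - (t + 1))).length = t + 1 := by rw [List.length_drop, hS]; omega
  have heq : w.drop (m - (t + 1)) = S.drop (m - (t + 1)) := by
    apply List.ext_getElem (hu.trans hv.symm)
    intro n h1 h2
    rw [List.getElem_drop, List.getElem_drop]
    have hn : n < t + 1 := hu ▸ h1
    have key := hc (t + 1 - n) (by omega) (by omega)
    have e1 : m - (t + 1 - n) = m - (t + 1) + n := by omega
    rw [e1, List.getI_eq_getElem _ (by omega : m - (t+1) + n < w.length),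
        List.getI_eq_getElem _ (by omega : m - (t+1) + n < S.length)] at key
    exact key
  have hinf : w.drop (m - (t + 1)) <:+: S := heq ▸ (List.drop_suffix _ S).isInfix
  have := repSub_maximal (List.drop_suffix (m - (t + 1)) w) hinf
  rw [hu] at this
  omega

theorem drop_last_eq {a : List A} {m : ℕ} (ha : a.length = m) (hm : 1 ≤ m) :
    a.drop (m - 1) = [a.getI (m - 1)] := by
  apply List.ext_getElem
  · simp [ha]; omega
  · intro n h1 h2
    simp only [List.length_drop, ha] at h1
    obtain rfl : n = 0 := by omega
    rw [List.getElem_drop]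
    simp only [List.getElem_singleton]
    rw [List.getI_eq_getElem _ (by omega : m - 1 < a.length)]
    congr 1

end Helpers2

theorem no_occ {A : Type*} [DecidableEq A] [Inhabited A] {S w : List A} {m : ℕ}
    (hS : S.length = m) (hw : w.length = m) (hm : 1 ≤ m)
    (h0 : (repSub S w).length = 0) :
    ¬∃ j, j + 1 < m ∧ S.getI j = w.getI (m - 1) := by
  rintro ⟨j, hj, he⟩
  have hjS : j < S.length := by omega
  rw [List.getI_eq_getElem _ hjS] at he
  have hmem : w.getI (m - 1) ∈ S := he ▸ List.getElem_mem hjS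
  have hinf := singleton_infix_of_mem hmem
  have hsuf : [w.getI (m - 1)] <:+ w := by
    rw [← drop_last_eq hw hm]; exact List.drop_suffix _ w
  have hle := repSub_maximal hsuf hinf
  simp only [List.length_singleton, h0] at hle
  omega

/-- Let `S ∈ Σ^m` and let `a, a' ∈ Σ^m` satisfy
`rep_{subcl(S)}(a) = rep_{subcl(S)}(a')`. Then `f_BMH(a) = f_BMH(a')` and
`g_BMH(a) = g_BMH(a')`. -/
theorem subcl_compatible_BMH {A : Type*} [Fintype A] [DecidableEq A] [Inhabited A]
    (m : ℕ) (hm : 1 ≤ m) (S : List A) (hS : S.length = m)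
    (a a' : List A) (ha : a.length = m) (ha' : a'.length = m)
    (hrep : repSub S a = repSub S a') :
    fBMH S m a = fBMH S m a' ∧ gBMH S m a = gBMH S m a' := by
  by_cases haS : a = S
  · have hrS : repSub S a' = S := by rw [← hrep, haS, repSub_self]
    have h2 : a' = S := by
      have hh := repSub_suffix S a'
      rw [hrS] at hh
      exact (hh.eq_of_length (hS.trans ha'.symm)).symm
    rw [haS, h2]
    exact ⟨rfl, rfl⟩
  · have ha'S : a' ≠ S := by
      intro h
      apply haS
      have hrS : repSub S a = S := by rw [hrep, h, repSub_self]
      have hh := repSub_suffix S a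
      rw [hrS] at hh
      exact (hh.eq_of_length (hS.trans ha.symm)).symm
    set t := (repSub S a).length with ht
    have htm : t < m := repSub_length_lt hS ha haS
    have hchar : ∀ i, 1 ≤ i → i ≤ t → a.getI (m - i) = a'.getI (m - i) := by
      intro i h1 h2
      have e1 := suffix_getI (repSub_suffix S a) h1 h2
      have e2 := suffix_getI (repSub_suffix S a') h1
        (show i ≤ (repSub S a').length by rw [← hrep]; exact h2)
      rw [ha] at e1
      rw [ha', ← hrep] at e2
      rw [e1, e2]
    constructor
    · show fBM S m a = fBM S m a'
      unfold fBM
      rw [if_neg haS, if_neg ha'S]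
      obtain ⟨i1, hi11, hi12, hi13⟩ := mismatch_exists hS ha haS
      obtain ⟨i2, hi21, hi22, hi23⟩ := mismatch_exists hS ha' ha'S
      rw [← hrep] at hi22
      have hM : {i : ℕ | 1 ≤ i ∧ i ≤ m ∧ a.getI (m - i) ≠ S.getI (m - i)}.Nonempty :=
        ⟨i1, hi11, by omega, hi13⟩
      have hM' : {i : ℕ | 1 ≤ i ∧ i ≤ m ∧ a'.getI (m - i) ≠ S.getI (m - i)}.Nonempty :=
        ⟨i2, hi21, by omega, hi23⟩
      have hmem1 : i1 ∈ {i : ℕ | 1 ≤ i ∧ i ≤ m ∧ a.getI (m - i) ≠ S.getI (m - i)} :=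
        ⟨hi11, by omega, hi13⟩
      have hmem2 : i2 ∈ {i : ℕ | 1 ≤ i ∧ i ≤ m ∧ a'.getI (m - i) ≠ S.getI (m - i)} :=
        ⟨hi21, by omega, hi23⟩
      have hb : sInf {i : ℕ | 1 ≤ i ∧ i ≤ m ∧ a.getI (m - i) ≠ S.getI (m - i)} ≤ t + 1 :=
        (Nat.sInf_le hmem1).trans hi12
      have hb' : sInf {i : ℕ | 1 ≤ i ∧ i ≤ m ∧ a'.getI (m - i) ≠ S.getI (m - i)} ≤ t + 1 :=
        (Nat.sInf_le hmem2).trans hi22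
      apply le_antisymm
      · by_cases hc : sInf {i : ℕ | 1 ≤ i ∧ i ≤ m ∧ a'.getI (m - i) ≠ S.getI (m - i)} ≤ t
        · obtain ⟨p1, p2, p3⟩ := Nat.sInf_mem hM'
          exact Nat.sInf_le ⟨p1, p2, by rw [hchar _ p1 hc]; exact p3⟩
        · omega
      · by_cases hc : sInf {i : ℕ | 1 ≤ i ∧ i ≤ m ∧ a.getI (m - i) ≠ S.getI (m - i)} ≤ t
        · obtain ⟨p1, p2, p3⟩ := Nat.sInf_mem hM
          exact Nat.sInf_le ⟨p1, p2, by rw [← hchar _ p1 hc]; exact p3⟩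
        · omega
    · by_cases ht0 : t = 0
      · have n1 := no_occ hS ha hm ht0
        have n2 := no_occ hS ha' hm (by rw [← hrep]; exact ht0)
        show bcBM S m a 1 = bcBM S m a' 1
        unfold bcBM
        rw [if_neg n1, if_neg n2]
      · have h1 : a.getI (m - 1) = a'.getI (m - 1) := hchar 1 le_rfl (by omega)
        show bcBM S m a 1 = bcBM S m a' 1
        unfold bcBM
        rw [h1]
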